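/- Let (G, l, ⊥) be a Hilbert geometry. If S ⊆ G is a closed subspace (S^{⊥⊥} = S) and a ∈ G, then the subspace cl({a} ∪ S) is closed: (cl({a} ∪ S))^{⊥⊥} = cl({a} ∪ S). -/

import Mathlib

universe u

structure ProjGeom (G : Type*) where
  l : G → G → G → Prop
  g1 : ∀ a b, l a b a
  g2 : ∀ a b p q, l a p q → l b p q → p ≠ q → l a b p
  g3 : ∀ a b c d p, l p a b → l p c d → ∃ q, l q a c ∧ l q b d

namespace ProjGeom

variable {G : Type*} (PG : ProjGeom G)

open scoped Classical in
/-- The projective line through `a` and `b`, with the convention `a ⋆ a = {a}`. -/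
noncomputable def star (a b : G) : Set G :=
  if a = b then {a} else {x | PG.l x a b}

/-- A subspace of a projective geometry. -/
def IsSubspace (S : Set G) : Prop :=
  ∀ a ∈ S, ∀ b ∈ S, PG.star a b ⊆ S

/-- The projective closure of a subset. -/
def cl (A : Set G) : Set G :=
  ⋂₀ {S : Set G | PG.IsSubspace S ∧ A ⊆ S}

end ProjGeom

namespace ProjGeom

variable {G : Type*} {PG : ProjGeom G}

lemma l_rot {a b c : G} (h : PG.l a b c) : PG.l c a b := by
  by_cases hbc : b = c
  · subst hbc; exact PG.g1 b a
  · exact PG.g2 c a b c (PG.g1 c b) h hbc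

lemma l_swap {a b c : G} (h : PG.l a b c) : PG.l a c b := by
  by_cases hbc : b = c
  · subst hbc; exact h
  · exact PG.g2 a c b c h (PG.g1 c b) hbc

lemma mem_star_of_l {a b x : G} (hab : a ≠ b) (h : PG.l x a b) : x ∈ PG.star a b := by
  simp only [star, if_neg hab]; exact h

lemma l_of_mem_star {a b x : G} (hab : a ≠ b) (h : x ∈ PG.star a b) : PG.l x a b := by
  simpa only [star, if_neg hab, Set.mem_setOf_eq] using h

lemma left_mem_star (a b : G) : a ∈ PG.star a b := by
  by_cases hab : a = b
  · subst hab; simp [star]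
  · exact mem_star_of_l hab (l_swap (PG.g1 a b))

lemma right_mem_star (a b : G) : b ∈ PG.star a b := by
  by_cases hab : a = b
  · subst hab; simp [star]
  · exact mem_star_of_l hab (PG.g1 b a)

lemma star_comm (a b : G) : PG.star a b = PG.star b a := by
  by_cases hab : a = b
  · subst hab; rfl
  · ext x
    simp only [star, if_neg hab, if_neg (Ne.symm hab), Set.mem_setOf_eq]
    exact ⟨l_swap, l_swap⟩

lemma l_trans {a b p q c : G} (hab : a ≠ b) (hp : PG.l p a b) (hq : PG.l q a b)
    (hc : PG.l c a b) : PG.l c p q := by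
  have h1 : PG.l c p a := PG.g2 c p a b hc hp hab
  have h2 : PG.l q p a := PG.g2 q p a b hq hp hab
  by_cases hpa : p = a
  · subst hpa
    exact l_swap (PG.g2 c q p b hc hq hab)
  · exact l_swap (PG.g2 c q p a h1 h2 hpa)

lemma star_eq {a b p q : G} (hab : a ≠ b) (hpq : p ≠ q)
    (hp : PG.l p a b) (hq : PG.l q a b) : PG.star a b = PG.star p q := by
  have hapq : PG.l a p q := l_rot (PG.g2 p q a b hp hq hab)
  have hbpq : PG.l b p q := l_rot (PG.g2 p q b a (l_swap hp) (l_swap hq) (Ne.symm hab))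
  ext x
  simp only [star, if_neg hab, if_neg hpq, Set.mem_setOf_eq]
  exact ⟨fun hx => l_trans hab hp hq hx, fun hx => l_trans hpq hapq hbpq hx⟩

variable (PG) in
def join (E F : Set G) : Set G :=
  E ∪ F ∪ {z | ∃ e ∈ E, ∃ f ∈ F, e ≠ f ∧ PG.l z e f}

lemma left_subset_join (E F : Set G) : E ⊆ PG.join E F := fun x hx =>
  Or.inl (Or.inl hx)

lemma right_subset_join (E F : Set G) : F ⊆ PG.join E F := fun x hx =>
  Or.inl (Or.inr hx)

lemma join_comm (E F : Set G) : PG.join E F = PG.join F E := by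
  ext x
  constructor
  · rintro ((h | h) | ⟨e, he, f, hf, hef, hl⟩)
    · exact Or.inl (Or.inr h)
    · exact Or.inl (Or.inl h)
    · exact Or.inr ⟨f, hf, e, he, Ne.symm hef, l_swap hl⟩
  · rintro ((h | h) | ⟨f, hf, e, he, hfe, hl⟩)
    · exact Or.inl (Or.inr h)
    · exact Or.inl (Or.inl h)
    · exact Or.inr ⟨e, he, f, hf, Ne.symm hfe, l_swap hl⟩

lemma line_left {E F : Set G} (hE : PG.IsSubspace E) {e u z : G}
    (he : e ∈ E) (hu : u ∈ PG.join E F) (hz : z ∈ PG.star e u) : z ∈ PG.join E F := by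
  by_cases heu : e = u
  · subst heu
    simp only [star, if_pos rfl, Set.mem_singleton_iff] at hz
    subst hz; exact left_subset_join E F he
  have hl : PG.l z e u := l_of_mem_star heu hz
  rcases hu with (huE | huF) | ⟨e', he', f', hf', hne, hl'⟩
  · exact left_subset_join E F (hE e he u huE hz)
  · exact Or.inr ⟨e, he, u, huF, heu, hl⟩
  · by_cases hee' : e' = e
    · subst hee'
      have hstar : PG.star e' f' = PG.star e' u :=
        star_eq hne heu (l_swap (PG.g1 e' f')) hl'
      have : z ∈ PG.star e' f' := hstar ▸ hz
      exact Or.inr ⟨e', he, f', hf', hne, l_of_mem_star hne this⟩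
    · obtain ⟨q, hq1, hq2⟩ := PG.g3 e' f' e z u hl' (l_swap (l_rot hl))
      have hqE : q ∈ E := hE e' he' e he (mem_star_of_l hee' hq1)
      by_cases hqf : q = f'
      · subst hqf
        have huE : u ∈ E := hE e' he' q hqE (mem_star_of_l hne hl')
        exact left_subset_join E F (hE e he u huE hz)
      · exact Or.inr ⟨q, hqE, f', hf', hqf, l_rot hq2⟩

lemma line_right {E F : Set G} (hF : PG.IsSubspace F) {f u z : G}
    (hf : f ∈ F) (hu : u ∈ PG.join E F) (hz : z ∈ PG.star f u) : z ∈ PG.join E F := by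
  rw [join_comm] at hu ⊢
  exact line_left hF hf hu hz

lemma join_isSubspace {E F : Set G} (hE : PG.IsSubspace E) (hF : PG.IsSubspace F) :
    PG.IsSubspace (PG.join E F) := by
  intro x hx y hy z hz
  by_cases hxy : x = y
  · subst hxy
    simp only [star, if_pos rfl, Set.mem_singleton_iff] at hz
    subst hz; exact hx
  have hl : PG.l z x y := l_of_mem_star hxy hz
  rcases hx with (hxE | hxF) | ⟨e1, he1, f1, hf1, hef, hlx⟩
  · exact line_left hE hxE hy hz
  · exact line_right hF hxF hy hz
  · by_cases he1y : e1 = y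
    · subst he1y
      -- x is on the line through y=e1 and f1
      have h1 : PG.star e1 f1 = PG.star e1 x :=
        star_eq hef (Ne.symm hxy) (l_swap (PG.g1 e1 f1)) hlx
      have hz' : z ∈ PG.star e1 f1 := by
        rw [h1, star_comm]; exact hz
      have hz'' : z ∈ PG.star f1 e1 := by rw [star_comm]; exact hz'
      exact line_right hF hf1 hy hz''
    · obtain ⟨q, hq1, hq2⟩ := PG.g3 e1 f1 y z x hlx (l_rot (l_rot hl))
      have hqJ : q ∈ PG.join E F := line_left hE he1 hy (mem_star_of_l he1y hq1)
      by_cases hqf : q = f1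
      · -- f1 on line e1 ⋆ y, so x, y, z all on line e1 ⋆ f1
        have hq1' : PG.l f1 e1 y := hqf ▸ hq1
        have h1 : PG.star e1 y = PG.star e1 f1 :=
          star_eq he1y hef (l_swap (PG.g1 e1 y)) hq1'
        have hxmem : x ∈ PG.star e1 y := by
          rw [h1]; exact mem_star_of_l hef hlx
        have h2 : PG.star e1 y = PG.star x y :=
          star_eq he1y hxy (l_of_mem_star he1y hxmem) (PG.g1 y e1)
        have : z ∈ PG.star e1 f1 := by rw [← h1, h2]; exact hz
        exact Or.inr ⟨e1, he1, f1, hf1, hef, l_of_mem_star hef this⟩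
      · have hzq : z ∈ PG.star f1 q :=
          mem_star_of_l (Ne.symm hqf) (l_swap (l_rot hq2))
        exact line_right hF hf1 hqJ hzq

lemma subset_cl (A : Set G) : A ⊆ PG.cl A := fun x hx S hS => hS.2 hx

lemma cl_isSubspace (A : Set G) : PG.IsSubspace (PG.cl A) := by
  intro a ha b hb z hz S hS
  exact hS.1 a (ha S hS) b (hb S hS) hz

lemma cl_min {A S : Set G} (hS : PG.IsSubspace S) (h : A ⊆ S) : PG.cl A ⊆ S :=
  Set.sInter_subset_of_mem ⟨hS, h⟩

lemma cl_self {S : Set G} (hS : PG.IsSubspace S) : PG.cl S = S :=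
  Set.Subset.antisymm (cl_min hS Set.Subset.rfl) (subset_cl S)

lemma cl_union_subset_join {E F : Set G} (hE : PG.IsSubspace E) (hF : PG.IsSubspace F) :
    PG.cl (E ∪ F) ⊆ PG.join E F :=
  cl_min (join_isSubspace hE hF)
    (Set.union_subset (left_subset_join E F) (right_subset_join E F))

end ProjGeom



/-- A Hilbert geometry: a projective geometry with an orthogonality relation satisfying
(O1)-(O5). -/
structure HilbGeom (G : Type u) extends ProjGeom G where
  perp : G → G → Prop
  o1 : ∀ a b : G, perp a b → a ≠ b
  o2 : ∀ a b : G, perp a b → perp b a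
  o3 : ∀ a b c p : G, a ≠ b → perp a p → perp b p → l c a b → perp c p
  o4 : ∀ a b : G, a ≠ b → ∃ q : G, l q a b ∧ perp q a
  o5 : ∀ S : Set G, toProjGeom.IsSubspace S →
    {x : G | ∀ y ∈ {z : G | ∀ w ∈ S, perp z w}, perp x y} = S →
    toProjGeom.cl (S ∪ {z : G | ∀ w ∈ S, perp z w}) = Set.univ

/-- The orthogonal of a set of points of a Hilbert geometry. -/
def HilbGeom.perpSet {G : Type u} (HG : HilbGeom G) (A : Set G) : Set G :=
  {x : G | ∀ a ∈ A, HG.perp x a}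

namespace HilbGeom

open ProjGeom

variable {G : Type u} (HG : HilbGeom G)

lemma perpSet_isSubspace (A : Set G) : HG.toProjGeom.IsSubspace (HG.perpSet A) := by
  intro a ha b hb z hz c hc
  by_cases hab : a = b
  · subst hab
    simp only [ProjGeom.star, if_pos rfl, Set.mem_singleton_iff] at hz
    subst hz; exact ha c hc
  · exact HG.o3 a b z c hab (ha c hc) (hb c hc) (l_of_mem_star hab hz)

lemma subset_biperp (A : Set G) : A ⊆ HG.perpSet (HG.perpSet A) :=
  fun x hx y hy => HG.o2 y x (hy x hx)

lemma perpSet_anti {A B : Set G} (h : A ⊆ B) : HG.perpSet B ⊆ HG.perpSet A :=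
  fun x hx a ha => hx a (h ha)

lemma perpSet_cl (A : Set G) : HG.perpSet (HG.toProjGeom.cl A) = HG.perpSet A := by
  apply Set.Subset.antisymm (HG.perpSet_anti (subset_cl A))
  intro x hx
  intro c hc
  have hsub : HG.toProjGeom.cl A ⊆ {y | HG.perp y x} := by
    apply cl_min
    · intro a ha b hb z hz
      by_cases hab : a = b
      · subst hab
        simp only [ProjGeom.star, if_pos rfl, Set.mem_singleton_iff] at hz
        subst hz; exact ha
      · exact HG.o3 a b z x hab ha hb (l_of_mem_star hab hz)
    · exact fun a ha => HG.o2 x a (hx a ha)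
  exact HG.o2 c x (hsub hc)

/-- Key lemma: for `p ⊥ S`, the subspace `cl ({p} ∪ S)` is closed. -/
lemma closed_join_perp (S : Set G) (hS : HG.toProjGeom.IsSubspace S)
    (hclosed : HG.perpSet (HG.perpSet S) = S) {p : G} (hp : p ∈ HG.perpSet S) :
    HG.perpSet (HG.perpSet (HG.toProjGeom.cl ({p} ∪ S))) =
      HG.toProjGeom.cl ({p} ∪ S) := by
  set T := HG.toProjGeom.cl ({p} ∪ S) with hT
  have hTsub : HG.toProjGeom.IsSubspace T := cl_isSubspace _
  have hpT : p ∈ T := subset_cl _ (Or.inl rfl)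
  have hST : S ⊆ T := fun s hs => subset_cl _ (Or.inr hs)
  apply Set.Subset.antisymm _ (HG.subset_biperp T)
  -- the biorthogonal of T is a subspace containing T
  have hbisub : HG.toProjGeom.IsSubspace (HG.perpSet (HG.perpSet T)) :=
    HG.perpSet_isSubspace _
  have hTbi : T ⊆ HG.perpSet (HG.perpSet T) := HG.subset_biperp T
  -- Claim: any point of T^⊥⊥ ∩ S^⊥ equals p (hence lies in T)
  have claimC : ∀ q, q ∈ HG.perpSet (HG.perpSet T) → q ∈ HG.perpSet S → q ∈ T := by
    intro q hq1 hq2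
    by_cases hqp : q = p
    · subst hqp; exact hpT
    exfalso
    have hpq : p ≠ q := fun h => hqp h.symm
    obtain ⟨z, hz1, hz2⟩ := HG.o4 p q hpq
    have hzmem : z ∈ HG.toProjGeom.star p q := mem_star_of_l hpq hz1
    have hz_bp : z ∈ HG.perpSet (HG.perpSet T) :=
      hbisub p (hTbi hpT) q hq1 hzmem
    have hz_S : z ∈ HG.perpSet S :=
      HG.perpSet_isSubspace S p hp q hq2 hzmem
    have hz_T : z ∈ HG.perpSet T := by
      rw [hT, HG.perpSet_cl]
      rintro w (rfl | hw)
      · exact hz2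
      · exact hz_S w hw
    exact HG.o1 z z (hz_bp z hz_T) rfl
  intro x hx
  have huniv : HG.toProjGeom.cl (S ∪ HG.perpSet S) = Set.univ := HG.o5 S hS hclosed
  have hxJ : x ∈ HG.toProjGeom.join S (HG.perpSet S) := by
    apply cl_union_subset_join hS (HG.perpSet_isSubspace S)
    rw [huniv]; trivial
  rcases hxJ with (hxS | hxP) | ⟨e, he, q, hq, hne, hl⟩
  · exact hST hxS
  · exact claimC x hx hxP
  · by_cases hxe : x = e
    · subst hxe; exact hST he
    have hex : e ≠ x := fun h => hxe h.symm
    have hqmem : q ∈ HG.toProjGeom.star e x :=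
      mem_star_of_l hex (l_swap (l_rot hl))
    have hqbp : q ∈ HG.perpSet (HG.perpSet T) :=
      hbisub e (hTbi (hST he)) x hx hqmem
    have hqT : q ∈ T := claimC q hqbp hq
    exact hTsub e (hST he) q hqT (mem_star_of_l hne hl)

end HilbGeom



/-- In a Hilbert geometry, if `S` is a (biorthogonally) closed subspace and `a` a point,
then the subspace `cl ({a} ∪ S)` is closed. -/
theorem closed_join_atom {G : Type u} (HG : HilbGeom G) (S : Set G)
    (hS : HG.toProjGeom.IsSubspace S)
    (hclosed : HG.perpSet (HG.perpSet S) = S) (a : G) :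
    HG.perpSet (HG.perpSet (HG.toProjGeom.cl ({a} ∪ S))) =
      HG.toProjGeom.cl ({a} ∪ S) := by
  open ProjGeom in
  by_cases haS : a ∈ S
  · have h1 : ({a} : Set G) ∪ S = S := by
      rw [Set.union_eq_self_of_subset_left (Set.singleton_subset_iff.mpr haS)]
    rw [h1, cl_self hS]
    exact hclosed
  · have huniv : HG.toProjGeom.cl (S ∪ HG.perpSet S) = Set.univ := HG.o5 S hS hclosed
    have haJ : a ∈ HG.toProjGeom.join S (HG.perpSet S) := by
      apply cl_union_subset_join hS (HG.perpSet_isSubspace S)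
      rw [huniv]; trivial
    rcases haJ with (h | h) | ⟨e, he, p, hp, hne, hl⟩
    · exact absurd h haS
    · exact HG.closed_join_perp S hS hclosed h
    · by_cases hae : a = e
      · exact absurd (hae ▸ he) haS
      by_cases hap : a = p
      · exact HG.closed_join_perp S hS hclosed (hap ▸ hp)
      have hEq : HG.toProjGeom.cl ({a} ∪ S) = HG.toProjGeom.cl ({p} ∪ S) := by
        apply Set.Subset.antisymm
        · apply cl_min (cl_isSubspace _)
          apply Set.union_subset
          · rw [Set.singleton_subset_iff]
            exact cl_isSubspace _ e (subset_cl _ (Or.inr he)) p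
              (subset_cl _ (Or.inl rfl)) (mem_star_of_l hne hl)
          · exact fun s hs => subset_cl _ (Or.inr hs)
        · apply cl_min (cl_isSubspace _)
          apply Set.union_subset
          · rw [Set.singleton_subset_iff]
            exact cl_isSubspace _ a (subset_cl _ (Or.inl rfl)) e
              (subset_cl _ (Or.inr he)) (mem_star_of_l hae (l_rot hl))
          · exact fun s hs => subset_cl _ (Or.inr hs)
      rw [hEq]
      exact HG.closed_join_perp S hS hclosed hp
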